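/- For every integer k ≥ 3 with k ≠ 14, there exists an integer s with ⌈(k−1)/2⌉ ≤ s ≤ k−1−⌊(k−1)/3⌋ such that s+1 is prime. -/

import Mathlib

open Finset Nat

namespace PIR


lemma fact_fact {p n b : ℕ} (hp : p.Prime) (hb : Nat.log p n < b) :
    (n !).factorization p = ∑ i ∈ Finset.Ico 1 b, n / p ^ i := by
  rw [Nat.factorization_def _ hp]
  exact @padicValNat_factorial p n b ⟨hp⟩ hb

def F (m : ℕ) : ℕ := m ! * (m/30)!
def G (m : ℕ) : ℕ := (m/2)! * ((m/3)! * (m/5)!)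

lemma F_pos (m : ℕ) : 0 < F m := Nat.mul_pos (Nat.factorial_pos _) (Nat.factorial_pos _)
lemma G_pos (m : ℕ) : 0 < G m :=
  Nat.mul_pos (Nat.factorial_pos _) (Nat.mul_pos (Nat.factorial_pos _) (Nat.factorial_pos _))

lemma nuF {p m b : ℕ} (hp : p.Prime) (hb : Nat.log p m < b) :
    (F m).factorization p = ∑ i ∈ Finset.Ico 1 b, (m / p ^ i + (m/30) / p ^ i) := by
  rw [F, Nat.factorization_mul (Nat.factorial_ne_zero _) (Nat.factorial_ne_zero _)]
  have h30 : Nat.log p (m/30) < b := lt_of_le_of_lt (Nat.log_mono_right (Nat.div_le_self _ _)) hb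
  simp only [Finsupp.add_apply, fact_fact hp hb, fact_fact hp h30, Finset.sum_add_distrib]

lemma nuG {p m b : ℕ} (hp : p.Prime) (hb : Nat.log p m < b) :
    (G m).factorization p = ∑ i ∈ Finset.Ico 1 b, ((m/2) / p ^ i + ((m/3) / p ^ i + (m/5) / p ^ i)) := by
  have h2 : Nat.log p (m/2) < b := lt_of_le_of_lt (Nat.log_mono_right (Nat.div_le_self _ _)) hb
  have h3 : Nat.log p (m/3) < b := lt_of_le_of_lt (Nat.log_mono_right (Nat.div_le_self _ _)) hb
  have h5 : Nat.log p (m/5) < b := lt_of_le_of_lt (Nat.log_mono_right (Nat.div_le_self _ _)) hb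
  rw [G, Nat.factorization_mul (Nat.factorial_ne_zero _)
    (Nat.mul_ne_zero (Nat.factorial_ne_zero _) (Nat.factorial_ne_zero _)),
    Nat.factorization_mul (Nat.factorial_ne_zero _) (Nat.factorial_ne_zero _)]
  simp only [Finsupp.add_apply, fact_fact hp h2, fact_fact hp h3, fact_fact hp h5,
    Finset.sum_add_distrib]

lemma div_div' (m d q : ℕ) : m / d / q = m / q / d := by
  rw [Nat.div_div_eq_div_mul, Nat.div_div_eq_div_mul, Nat.mul_comm]

lemma G_dvd_F (m : ℕ) : G m ∣ F m := by
  rw [← Nat.factorization_le_iff_dvd (G_pos m).ne' (F_pos m).ne']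
  intro p
  by_cases hp : p.Prime
  · rw [nuF hp (Nat.lt_succ_self _), nuG hp (Nat.lt_succ_self _)]
    apply Finset.sum_le_sum
    intro i _
    rw [div_div' m 2, div_div' m 3, div_div' m 5, div_div' m 30]
    omega
  · simp [Nat.factorization_eq_zero_of_not_prime _ hp]

def N (m : ℕ) : ℕ := F m / G m

lemma N_mul_G (m : ℕ) : N m * G m = F m := Nat.div_mul_cancel (G_dvd_F m)

lemma N_pos (m : ℕ) : 0 < N m :=
  Nat.div_pos (Nat.le_of_dvd (F_pos m) (G_dvd_F m)) (G_pos m)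

lemma nuN {p m : ℕ} (hp : p.Prime) :
    (N m).factorization p
      = ∑ i ∈ Finset.Ico 1 (Nat.log p m + 1), (m / p ^ i + (m/30) / p ^ i)
        - ∑ i ∈ Finset.Ico 1 (Nat.log p m + 1), ((m/2) / p ^ i + ((m/3) / p ^ i + (m/5) / p ^ i)) := by
  rw [N, Nat.factorization_div (G_dvd_F m)]
  simp [nuF hp (Nat.lt_succ_self _), nuG hp (Nat.lt_succ_self _)]

lemma prime_dvd_N {p m : ℕ} (hp : p.Prime) (h1 : p ≤ m) (h2 : m < 6 * p) : p ∣ N m := by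
  have hmp : 1 ≤ m / p := (Nat.one_le_div_iff hp.pos).2 h1
  have hmp5 : m / p ≤ 5 := by
    by_contra h
    push_neg at h
    have := (Nat.le_div_iff_mul_le hp.pos).1 h
    omega
  rw [Nat.Prime.dvd_iff_one_le_factorization hp (N_pos m).ne']
  have hb : 1 < Nat.log p m + 1 := by
    have : 1 ≤ Nat.log p m := by
      rw [Nat.le_log_iff_pow_le hp.one_lt (by omega : m ≠ 0)]
      simpa using h1
    omega
  rw [nuN hp, Finset.sum_eq_sum_Ico_succ_bot hb, Finset.sum_eq_sum_Ico_succ_bot hb]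
  have hterm : ∀ i ∈ Finset.Ico (1+1) (Nat.log p m + 1),
      (m/2) / p ^ i + ((m/3) / p ^ i + (m/5) / p ^ i) ≤ m / p ^ i + (m/30) / p ^ i := by
    intro i _
    rw [div_div' m 2, div_div' m 3, div_div' m 5, div_div' m 30]
    omega
  have hsum := Finset.sum_le_sum hterm
  have hfirst : (m/2) / p ^ 1 + ((m/3) / p ^ 1 + (m/5) / p ^ 1) + 1 ≤ m / p ^ 1 + (m/30) / p ^ 1 := by
    rw [div_div' m 2, div_div' m 3, div_div' m 5, div_div' m 30, pow_one]
    omega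
  omega

lemma nuN_le_log {p m : ℕ} (hp : p.Prime) : (N m).factorization p ≤ Nat.log p m := by
  rw [nuN hp]
  have hterm : ∀ i ∈ Finset.Ico 1 (Nat.log p m + 1),
      m / p ^ i + (m/30) / p ^ i ≤ ((m/2) / p ^ i + ((m/3) / p ^ i + (m/5) / p ^ i)) + 1 := by
    intro i _
    rw [div_div' m 2, div_div' m 3, div_div' m 5, div_div' m 30]
    omega
  have hsum : ∑ i ∈ Finset.Ico 1 (Nat.log p m + 1), (m / p ^ i + (m/30) / p ^ i)
      ≤ (∑ i ∈ Finset.Ico 1 (Nat.log p m + 1), ((m/2) / p ^ i + ((m/3) / p ^ i + (m/5) / p ^ i)))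
        + Nat.log p m := by
    calc ∑ i ∈ Finset.Ico 1 (Nat.log p m + 1), (m / p ^ i + (m/30) / p ^ i)
        ≤ ∑ i ∈ Finset.Ico 1 (Nat.log p m + 1),
            (((m/2) / p ^ i + ((m/3) / p ^ i + (m/5) / p ^ i)) + 1) := Finset.sum_le_sum hterm
      _ = (∑ i ∈ Finset.Ico 1 (Nat.log p m + 1), ((m/2) / p ^ i + ((m/3) / p ^ i + (m/5) / p ^ i)))
            + ∑ _i ∈ Finset.Ico 1 (Nat.log p m + 1), 1 := Finset.sum_add_distrib
      _ = _ := by rw [Finset.sum_const, Nat.card_Ico]; simp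
  omega

lemma N_dvd_primes {p m : ℕ} (hp : p.Prime) (h : p ∣ N m) : p ≤ m := by
  have hF : p ∣ F m := h.trans ⟨G m, (N_mul_G m).symm⟩
  rcases hp.dvd_mul.1 hF with h' | h'
  · exact (Nat.Prime.dvd_factorial hp).1 h'
  · have := (Nat.Prime.dvd_factorial hp).1 h'
    omega

lemma prod_fac_eq (m : ℕ) :
    ∏ p ∈ (Finset.range (m+1)).filter Nat.Prime, p ^ (N m).factorization p = N m := by
  have hsub : (N m).primeFactors ⊆ (Finset.range (m+1)).filter Nat.Prime := by
    intro p hp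
    rw [Nat.mem_primeFactors] at hp
    exact Finset.mem_filter.2 ⟨Finset.mem_range.2 (by
      have := N_dvd_primes hp.1 hp.2.1; omega), hp.1⟩
  rw [← Finset.prod_subset hsub (fun p _ hp => by
      have h0 : (N m).factorization p = 0 := by
        rwa [← Nat.support_factorization, Finsupp.notMem_support_iff] at hp
      rw [h0, pow_zero])]
  conv_rhs => rw [← Nat.factorization_prod_pow_eq_self (N_pos m).ne']
  rw [Nat.prod_factorization_eq_prod_primeFactors]

lemma N_le_primorial_mul (m : ℕ) (hm : 1 ≤ m) :
    N m ≤ primorial m * m ^ (Nat.sqrt m) := by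
  classical
  set S := (Finset.range (m+1)).filter Nat.Prime with hS
  rw [← prod_fac_eq m, ← Finset.prod_filter_mul_prod_filter_not S (fun p => p ≤ Nat.sqrt m),
    mul_comm (primorial m)]
  apply Nat.mul_le_mul
  · calc ∏ p ∈ S.filter (fun p => p ≤ Nat.sqrt m), p ^ (N m).factorization p
        ≤ ∏ _p ∈ S.filter (fun p => p ≤ Nat.sqrt m), m := by
          apply Finset.prod_le_prod'
          intro p hp
          simp only [hS, Finset.mem_filter, Finset.mem_range] at hp
          calc p ^ (N m).factorization p ≤ p ^ Nat.log p m :=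
                Nat.pow_le_pow_right hp.1.2.pos (nuN_le_log hp.1.2)
            _ ≤ m := Nat.pow_log_le_self p (by omega)
      _ ≤ m ^ (Nat.sqrt m) := by
          rw [Finset.prod_const]
          apply Nat.pow_le_pow_right (by omega)
          calc (S.filter (fun p => p ≤ Nat.sqrt m)).card
              ≤ (Finset.Ico 2 (Nat.sqrt m + 1)).card := by
                apply Finset.card_le_card
                intro p hp
                simp only [hS, Finset.mem_filter, Finset.mem_range] at hp
                exact Finset.mem_Ico.2 ⟨hp.1.2.two_le, by omega⟩
            _ ≤ Nat.sqrt m := by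
                rw [Nat.card_Ico]; omega
  · calc ∏ p ∈ S.filter (fun p => ¬ p ≤ Nat.sqrt m), p ^ (N m).factorization p
        ≤ ∏ p ∈ S.filter (fun p => ¬ p ≤ Nat.sqrt m), p := by
          apply Finset.prod_le_prod'
          intro p hp
          simp only [hS, Finset.mem_filter, Finset.mem_range, not_le] at hp
          have hnu : (N m).factorization p ≤ 1 := by
            have := nuN_le_log (m := m) hp.1.2
            have hlog : Nat.log p m < 2 := by
              rw [Nat.log_lt_iff_lt_pow hp.1.2.one_lt (by omega : m ≠ 0)]
              calc m < (Nat.sqrt m + 1)^2 := Nat.lt_succ_sqrt' m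
                _ ≤ p ^ 2 := Nat.pow_le_pow_left (by omega) 2
            omega
          calc p ^ (N m).factorization p ≤ p ^ 1 := Nat.pow_le_pow_right hp.1.2.pos hnu
            _ = p := pow_one p
      _ ≤ ∏ p ∈ S, p := by
          apply Finset.prod_le_prod_of_subset_of_one_le' (Finset.filter_subset _ _)
          intro p hp _
          exact (Finset.mem_filter.1 hp).2.pos
      _ = primorial m := rfl

lemma primorial_le_N_mul (m : ℕ) : primorial m ≤ N m * primorial (m/6) := by
  classical
  have hsplit : primorial m = primorial (m/6)
      * (∏ p ∈ (Finset.Ico (m/6+1) (m+1)).filter (fun p => Nat.Prime p), p) := by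
    rw [primorial, primorial, Finset.range_eq_Ico, Finset.range_eq_Ico, ← Finset.prod_union
      (Finset.disjoint_filter_filter (Finset.Ico_disjoint_Ico_consecutive 0 (m/6+1) (m+1))),
      ← Finset.filter_union]
    congr 1
    rw [Finset.Ico_union_Ico_eq_Ico] <;> omega
  have hdvd : (∏ p ∈ (Finset.Ico (m/6+1) (m+1)).filter (fun p => Nat.Prime p), p) ∣ N m := by
    apply Finset.prod_primes_dvd
    · intro p hp
      exact (Finset.mem_filter.1 hp).2.prime
    · intro p hp
      have h1 := Finset.mem_Ico.1 (Finset.mem_filter.1 hp).1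
      exact prime_dvd_N (Finset.mem_filter.1 hp).2 (by omega) (by omega)
  calc primorial m = primorial (m/6) * _ := hsplit
    _ ≤ primorial (m/6) * N m := Nat.mul_le_mul_left _ (Nat.le_of_dvd (N_pos m) hdvd)
    _ = N m * primorial (m/6) := Nat.mul_comm _ _


lemma F_def (m : ℕ) : F m = m ! * (m/30)! := rfl
lemma G_def (m : ℕ) : G m = (m/2)! * ((m/3)! * (m/5)!) := rfl
lemma N_le_F (m : ℕ) : N m ≤ m ! * (m/30)! := Nat.div_le_self _ _


lemma fact_shift (a t : ℕ) : (a + t)! = a ! * ∏ j ∈ Finset.range t, (a + 1 + j) := by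
  induction t with
  | zero => simp
  | succ t ih =>
    rw [← Nat.add_assoc, Nat.factorial_succ, ih, Finset.prod_range_succ]
    ring

def U (m : ℕ) : ℕ := (∏ j ∈ Finset.range 30, (m + 1 + j)) * (m/30 + 1)
def V (m : ℕ) : ℕ :=
  (∏ j ∈ Finset.range 15, (m/2 + 1 + j)) *
  ((∏ j ∈ Finset.range 10, (m/3 + 1 + j)) * (∏ j ∈ Finset.range 6, (m/5 + 1 + j)))

lemma F_step (m : ℕ) : F (m + 30) = F m * U m := by
  rw [F_def, F_def, U]
  have h30 : (m + 30)/30 = m/30 + 1 := by omega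
  rw [h30, fact_shift m 30, Nat.factorial_succ]
  ring

lemma G_step (m : ℕ) : G (m + 30) = G m * V m := by
  rw [G_def, G_def, V]
  have h2 : (m + 30)/2 = m/2 + 15 := by omega
  have h3 : (m + 30)/3 = m/3 + 10 := by omega
  have h5 : (m + 30)/5 = m/5 + 6 := by omega
  rw [h2, h3, h5, fact_shift (m/2) 15, fact_shift (m/3) 10, fact_shift (m/5) 6]
  ring

lemma N_step (m : ℕ) : N (m + 30) * V m = N m * U m := by
  have h2 : (N (m+30) * V m) * G m = (N m * U m) * G m := by
    calc (N (m+30) * V m) * G m = N (m+30) * G (m+30) := by rw [G_step]; ring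
      _ = F (m+30) := N_mul_G _
      _ = F m * U m := F_step m
      _ = (N m * G m) * U m := by rw [N_mul_G]
      _ = (N m * U m) * G m := by ring
  exact Nat.eq_of_mul_eq_mul_right (G_pos m) h2

lemma prod_range_le (a c t : ℕ) (h : ∀ j, j < t → a + 1 + j ≤ c) :
    ∏ j ∈ Finset.range t, (a + 1 + j) ≤ c ^ t := by
  calc ∏ j ∈ Finset.range t, (a + 1 + j) ≤ ∏ _j ∈ Finset.range t, c :=
        Finset.prod_le_prod' (fun j hj => h j (Finset.mem_range.1 hj))
    _ = c ^ t := by rw [Finset.prod_const, Finset.card_range]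

lemma le_prod_range (a c t : ℕ) (h : ∀ j, j < t → c ≤ a + 1 + j) :
    c ^ t ≤ ∏ j ∈ Finset.range t, (a + 1 + j) := by
  calc c ^ t = ∏ _j ∈ Finset.range t, c := by rw [Finset.prod_const, Finset.card_range]
    _ ≤ ∏ j ∈ Finset.range t, (a + 1 + j) :=
        Finset.prod_le_prod' (fun j hj => h j (Finset.mem_range.1 hj))

def C30 : ℕ := 30233088000000

lemma chunk_low (m d t c : ℕ) (h : ∀ j, j < t → c ≤ d * (m/d + 1 + j)) :
    c ^ t ≤ d ^ t * ∏ j ∈ Finset.range t, (m/d + 1 + j) := by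
  calc c ^ t = ∏ _j ∈ Finset.range t, c := by rw [Finset.prod_const, Finset.card_range]
    _ ≤ ∏ j ∈ Finset.range t, (d * (m/d + 1 + j)) :=
        Finset.prod_le_prod' (fun j hj => h j (Finset.mem_range.1 hj))
    _ = d ^ t * ∏ j ∈ Finset.range t, (m/d + 1 + j) := by
        rw [Finset.prod_mul_distrib, Finset.prod_const, Finset.card_range]

lemma chunk_hi (m d t c : ℕ) (h : ∀ j, j < t → d * (m/d + 1 + j) ≤ c) :
    d ^ t * ∏ j ∈ Finset.range t, (m/d + 1 + j) ≤ c ^ t := by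
  calc d ^ t * ∏ j ∈ Finset.range t, (m/d + 1 + j)
      = ∏ j ∈ Finset.range t, (d * (m/d + 1 + j)) := by
        rw [Finset.prod_mul_distrib, Finset.prod_const, Finset.card_range]
    _ ≤ ∏ _j ∈ Finset.range t, c :=
        Finset.prod_le_prod' (fun j hj => h j (Finset.mem_range.1 hj))
    _ = c ^ t := by rw [Finset.prod_const, Finset.card_range]

lemma V_low (m : ℕ) : (m+1)^31 ≤ V m * C30 := by
  have h2 := chunk_low m 2 15 (m+1) (fun j _ => by omega)
  have h3 := chunk_low m 3 10 (m+1) (fun j _ => by omega)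
  have h5 := chunk_low m 5 6 (m+1) (fun j _ => by omega)
  calc (m+1)^31 = (m+1)^15 * ((m+1)^10 * (m+1)^6) := by ring
    _ ≤ (2^15 * ∏ j ∈ Finset.range 15, (m/2 + 1 + j)) *
        ((3^10 * ∏ j ∈ Finset.range 10, (m/3 + 1 + j)) *
         (5^6 * ∏ j ∈ Finset.range 6, (m/5 + 1 + j))) :=
        Nat.mul_le_mul h2 (Nat.mul_le_mul h3 h5)
    _ = V m * C30 := by rw [V]; norm_num [C30]; ring

lemma V_hi (m : ℕ) : V m * C30 ≤ (m+30)^31 := by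
  have h2 := chunk_hi m 2 15 (m+30) (fun j hj => by omega)
  have h3 := chunk_hi m 3 10 (m+30) (fun j hj => by omega)
  have h5 := chunk_hi m 5 6 (m+30) (fun j hj => by omega)
  calc V m * C30 = (2^15 * ∏ j ∈ Finset.range 15, (m/2 + 1 + j)) *
        ((3^10 * ∏ j ∈ Finset.range 10, (m/3 + 1 + j)) *
         (5^6 * ∏ j ∈ Finset.range 6, (m/5 + 1 + j))) := by rw [V]; norm_num [C30]; ring
    _ ≤ (m+30)^15 * ((m+30)^10 * (m+30)^6) := Nat.mul_le_mul h2 (Nat.mul_le_mul h3 h5)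
    _ = (m+30)^31 := by ring

lemma U_low (m : ℕ) : (m+1)^31 ≤ U m * 30 := by
  have h1 : (m+1)^30 ≤ ∏ j ∈ Finset.range 30, (m + 1 + j) :=
    le_prod_range m (m+1) 30 (fun j _ => by omega)
  have h2 : (m+1) ≤ (m/30 + 1) * 30 := by omega
  calc (m+1)^31 = (m+1)^30 * (m+1) := by ring
    _ ≤ (∏ j ∈ Finset.range 30, (m + 1 + j)) * ((m/30 + 1) * 30) := Nat.mul_le_mul h1 h2
    _ = U m * 30 := by rw [U]; ring

lemma U_hi (m : ℕ) : U m * 30 ≤ (m+30)^31 := by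
  have h1 : ∏ j ∈ Finset.range 30, (m + 1 + j) ≤ (m+30)^30 :=
    prod_range_le m (m+30) 30 (fun j hj => by omega)
  have h2 : (m/30 + 1) * 30 ≤ m + 30 := by omega
  calc U m * 30 = (∏ j ∈ Finset.range 30, (m + 1 + j)) * ((m/30 + 1) * 30) := by rw [U]; ring
    _ ≤ (m+30)^30 * (m+30) := Nat.mul_le_mul h1 h2
    _ = (m+30)^31 := by ring

lemma C30_low : 30 * 2^39 ≤ C30 := by norm_num [C30]
lemma C30_hi : C30 ≤ 30 * 2^40 := by norm_num [C30]

-- step inequalities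
lemma step_low (m : ℕ) : 2^39 * (N m * (m+1)^31) ≤ N (m+30) * (m+30)^31 := by
  have h1 : N (m+30) * (V m * C30) = (N m * U m) * C30 := by rw [← mul_assoc, N_step]
  calc 2^39 * (N m * (m+1)^31) ≤ 2^39 * (N m * (U m * 30)) := by
        exact Nat.mul_le_mul_left _ (Nat.mul_le_mul_left _ (U_low m))
    _ = (N m * U m) * (30 * 2^39) := by ring
    _ ≤ (N m * U m) * C30 := Nat.mul_le_mul_left _ C30_low
    _ = N (m+30) * (V m * C30) := h1.symm
    _ ≤ N (m+30) * (m+30)^31 := Nat.mul_le_mul_left _ (V_hi m)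

lemma step_hi (m : ℕ) : N (m+30) * (m+1)^31 * 30 ≤ 2^40 * (N m * (m+30)^31) * 30 := by
  have h1 : N (m+30) * (V m * C30) = (N m * U m) * C30 := by rw [← mul_assoc, N_step]
  calc N (m+30) * (m+1)^31 * 30 ≤ N (m+30) * (V m * C30) * 30 := by
        exact Nat.mul_le_mul_right _ (Nat.mul_le_mul_left _ (V_low m))
    _ = (N m * U m) * C30 * 30 := by rw [h1]
    _ ≤ (N m * U m) * (30 * 2^40) * 30 := Nat.mul_le_mul_right _ (Nat.mul_le_mul_left _ C30_hi)
    _ = (N m * (U m * 30)) * 2^40 * 30 := by ring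
    _ ≤ (N m * (m+30)^31) * 2^40 * 30 :=
        Nat.mul_le_mul_right _ (Nat.mul_le_mul_right _ (Nat.mul_le_mul_left _ (U_hi m)))
    _ = 2^40 * (N m * (m+30)^31) * 30 := by ring


lemma step_hi' (m : ℕ) : N (m+30) * (m+1)^31 ≤ 2^40 * (N m * (m+30)^31) :=
  Nat.le_of_mul_le_mul_right (step_hi m) (by norm_num)


lemma sq_bound (m' : ℕ) : (m'+30)*(m'+1) ≤ (m'+31)^2 := by nlinarith

lemma CL : ∀ m, 2^(39*(m/30)) ≤ N m * (m+1)^62 := by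
  intro m
  induction m using Nat.strong_induction_on with
  | _ m ih =>
    rcases lt_or_ge m 30 with hm | hm
    · have h0 : m/30 = 0 := by omega
      rw [h0]
      have := N_pos m
      have : 1 ≤ N m * (m+1)^62 := Nat.one_le_iff_ne_zero.2 (by positivity)
      simpa using this
    · obtain ⟨m', rfl⟩ : ∃ m', m = m' + 30 := ⟨m - 30, by omega⟩
      have ih' := ih m' (by omega)
      calc 2^(39*((m'+30)/30)) = 2^39 * 2^(39*(m'/30)) := by
            rw [← pow_add]; congr 1; omega
        _ ≤ 2^39 * (N m' * (m'+1)^62) := Nat.mul_le_mul_left _ ih'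
        _ = (2^39 * (N m' * (m'+1)^31)) * (m'+1)^31 := by ring
        _ ≤ (N (m'+30) * (m'+30)^31) * (m'+1)^31 := Nat.mul_le_mul_right _ (step_low m')
        _ = N (m'+30) * ((m'+30)*(m'+1))^31 := by rw [mul_pow]; ring
        _ ≤ N (m'+30) * ((m'+31)^2)^31 :=
            Nat.mul_le_mul_left _ (Nat.pow_le_pow_left (sq_bound m') 31)
        _ = N (m'+30) * (m'+30+1)^62 := by rw [← pow_mul]
  
lemma CU : ∀ m, N m ≤ 2^(104 + 40*(m/30)) * (m+1)^62 := by
  intro m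
  induction m using Nat.strong_induction_on with
  | _ m ih =>
    rcases lt_or_ge m 30 with hm | hm
    · have h0 : m/30 = 0 := by omega
      have h1 : N m ≤ 29 ! := by
        have := N_le_F m
        have h2 : m/30 = 0 := by omega
        rw [h2] at this
        simp only [Nat.factorial_zero, Nat.mul_one] at this
        exact this.trans (Nat.factorial_le (by omega))
      have h2 : (29 : ℕ)! ≤ 2^104 := by norm_num [Nat.factorial]
      calc N m ≤ 2^104 := h1.trans h2
        _ ≤ 2^(104 + 40*(m/30)) * (m+1)^62 := by
            rw [h0]
            have : 1 ≤ (m+1)^62 := Nat.one_le_iff_ne_zero.2 (by positivity)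
            calc (2:ℕ)^104 = 2^(104+40*0) * 1 := by norm_num
              _ ≤ 2^(104+40*0) * (m+1)^62 := Nat.mul_le_mul_left _ this
    · obtain ⟨m', rfl⟩ : ∃ m', m = m' + 30 := ⟨m - 30, by omega⟩
      have ih' := ih m' (by omega)
      have key : N (m'+30) * (m'+1)^31 ≤ (2^(104 + 40*((m'+30)/30)) * (m'+30+1)^62) * (m'+1)^31 := by
        calc N (m'+30) * (m'+1)^31 ≤ 2^40 * (N m' * (m'+30)^31) := step_hi' m'
          _ ≤ 2^40 * ((2^(104 + 40*(m'/30)) * (m'+1)^62) * (m'+30)^31) :=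
              Nat.mul_le_mul_left _ (Nat.mul_le_mul_right _ ih')
          _ = (2^40 * 2^(104 + 40*(m'/30))) * (((m'+30)*(m'+1))^31 * (m'+1)^31) := by
              rw [mul_pow]; ring
          _ ≤ (2^40 * 2^(104 + 40*(m'/30))) * (((m'+31)^2)^31 * (m'+1)^31) := by
              apply Nat.mul_le_mul_left
              exact Nat.mul_le_mul_right _ (Nat.pow_le_pow_left (sq_bound m') 31)
          _ = (2^(104 + 40*((m'+30)/30)) * (m'+30+1)^62) * (m'+1)^31 := by
              have e1 : (2:ℕ)^40 * 2^(104+40*(m'/30)) = 2^(104+40*((m'+30)/30)) := by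
                rw [← pow_add]; congr 1; omega
              rw [e1, ← pow_mul]
              ring
      have hpos : 0 < (m'+1)^31 := Nat.pow_pos (by omega)
      exact Nat.le_of_mul_le_mul_right key hpos


lemma succ_le_two_pow (m : ℕ) : m + 1 ≤ 2^(Nat.log 2 m + 1) :=
  Nat.lt_pow_succ_log_self (by norm_num) m

lemma N_le_bits (m : ℕ) : N m ≤ 2^(104 + 40*(m/30) + 62*(Nat.log 2 m + 1)) := by
  calc N m ≤ 2^(104 + 40*(m/30)) * (m+1)^62 := CU m
    _ ≤ 2^(104 + 40*(m/30)) * (2^(Nat.log 2 m + 1))^62 :=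
        Nat.mul_le_mul_left _ (Nat.pow_le_pow_left (succ_le_two_pow m) 62)
    _ = 2^(104 + 40*(m/30) + 62*(Nat.log 2 m + 1)) := by
        rw [← pow_mul, ← pow_add]; congr 1; ring

def Gb (m : ℕ) : ℕ := (8*m)/5 + (Nat.log 6 m + 1) * (104 + 62*(Nat.log 2 m + 1))

lemma primorial_le_bits : ∀ m, primorial m ≤ 2^(Gb m) := by
  intro m
  induction m using Nat.strong_induction_on with
  | _ m ih =>
    rcases lt_or_ge m 6 with hm | hm
    · have h30 : primorial m ≤ 30 := by
        interval_cases m <;> decide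
      have h166 : 166 ≤ Gb m := by
        have h1 : 1 ≤ Nat.log 6 m + 1 := by omega
        have h2 : 166 ≤ 104 + 62*(Nat.log 2 m + 1) := by omega
        calc 166 = 1 * 166 := by norm_num
          _ ≤ (Nat.log 6 m + 1) * (104 + 62*(Nat.log 2 m + 1)) := Nat.mul_le_mul h1 h2
          _ ≤ Gb m := Nat.le_add_left _ _
      calc primorial m ≤ 30 := h30
        _ ≤ 2^166 := by norm_num
        _ ≤ 2^(Gb m) := Nat.pow_le_pow_right (by norm_num) h166
    · have ih' := ih (m/6) (by omega)
      have hexp : 104 + 40*(m/30) + 62*(Nat.log 2 m + 1) + Gb (m/6) ≤ Gb m := by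
        have hK : Nat.log 6 (m/6) = Nat.log 6 m - 1 := Nat.log_div_base 6 m
        have hK1 : 1 ≤ Nat.log 6 m := by
          rw [Nat.le_log_iff_pow_le (by norm_num) (by omega : m ≠ 0)]
          simpa using hm
        have hL : Nat.log 2 (m/6) ≤ Nat.log 2 m := Nat.log_mono_right (Nat.div_le_self _ _)
        have hdiv : 40*(m/30) + (8*(m/6))/5 ≤ (8*m)/5 := by omega
        have hmul : (Nat.log 6 (m/6) + 1) * (104 + 62*(Nat.log 2 (m/6) + 1))
            ≤ (Nat.log 6 m) * (104 + 62*(Nat.log 2 m + 1)) := by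
          apply Nat.mul_le_mul (by omega)
          omega
        have hGb6 : Gb (m/6) = (8*(m/6))/5 + (Nat.log 6 (m/6) + 1) * (104 + 62*(Nat.log 2 (m/6) + 1)) := rfl
        have hGbm : Gb m = (8*m)/5 + (Nat.log 6 m + 1) * (104 + 62*(Nat.log 2 m + 1)) := rfl
        have hsplit : (Nat.log 6 m + 1) * (104 + 62*(Nat.log 2 m + 1))
            = (Nat.log 6 m) * (104 + 62*(Nat.log 2 m + 1)) + (104 + 62*(Nat.log 2 m + 1)) := by ring
        omega
      calc primorial m ≤ N m * primorial (m/6) := primorial_le_N_mul m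
        _ ≤ 2^(104 + 40*(m/30) + 62*(Nat.log 2 m + 1)) * 2^(Gb (m/6)) :=
            Nat.mul_le_mul (N_le_bits m) ih'
        _ = 2^(104 + 40*(m/30) + 62*(Nat.log 2 m + 1) + Gb (m/6)) := (pow_add 2 _ _).symm
        _ ≤ 2^(Gb m) := Nat.pow_le_pow_right (by norm_num) hexp

lemma two_pow_big : ∀ t, 21 ≤ t → 3320*(t+1)^2 ≤ 2^t := by
  intro t ht
  induction t, ht using Nat.le_induction with
  | base => norm_num
  | succ t ht ih =>
    have h1 : 3320*(t+1+1)^2 ≤ 2*(3320*(t+1)^2) := by nlinarith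
    calc 3320*(t+1+1)^2 ≤ 2*(3320*(t+1)^2) := h1
      _ ≤ 2*2^t := by omega
      _ = 2^(t+1) := by rw [pow_succ]; ring

lemma primorial_split {a b : ℕ} (hab : a ≤ b) :
    primorial b = primorial a * ∏ p ∈ (Finset.Ico (a+1) (b+1)).filter (fun p => Nat.Prime p), p := by
  classical
  rw [primorial, primorial, Finset.range_eq_Ico, Finset.range_eq_Ico, ← Finset.prod_union
    (Finset.disjoint_filter_filter (Finset.Ico_disjoint_Ico_consecutive 0 (a+1) (b+1))),
    ← Finset.filter_union]
  congr 1
  rw [Finset.Ico_union_Ico_eq_Ico] <;> omega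

theorem big (k : ℕ) (hk : 7000000 ≤ k) : ∃ p, p.Prime ∧ k+1 ≤ 2*p ∧ 3*p ≤ 2*k+3 := by
  by_contra hcon
  push_neg at hcon
  set y := k/2 with hy
  set z := (2*k+3)/3 with hz
  have hyz : y ≤ z := by omega
  have hPzy : primorial z = primorial y := by
    rw [primorial_split hyz]
    have hempty : (Finset.Ico (y+1) (z+1)).filter (fun p => Nat.Prime p) = ∅ := by
      rw [Finset.filter_eq_empty_iff]
      intro p hp hprime
      have h1 := Finset.mem_Ico.1 hp
      have h2 := hcon p hprime (by omega)
      omega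
    rw [hempty]
    simp
  -- main chain
  have hz1 : 1 ≤ z := by omega
  have hchain : 2^(39*(z/30)) ≤ 2^(Gb y + Nat.sqrt z * (Nat.log 2 z + 1) + 62*(Nat.log 2 z + 1)) := by
    calc 2^(39*(z/30)) ≤ N z * (z+1)^62 := CL z
      _ ≤ (primorial z * z ^ (Nat.sqrt z)) * (z+1)^62 :=
          Nat.mul_le_mul_right _ (N_le_primorial_mul z hz1)
      _ = (primorial y * z ^ (Nat.sqrt z)) * (z+1)^62 := by rw [hPzy]
      _ ≤ (2^(Gb y) * (2^(Nat.log 2 z + 1)) ^ (Nat.sqrt z)) * (2^(Nat.log 2 z + 1))^62 := by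
          apply Nat.mul_le_mul
          · apply Nat.mul_le_mul (primorial_le_bits y)
            exact Nat.pow_le_pow_left (by
              have := Nat.lt_pow_succ_log_self (b := 2) (by norm_num) z
              omega) _
          · exact Nat.pow_le_pow_left (succ_le_two_pow z) 62
      _ = 2^(Gb y + Nat.sqrt z * (Nat.log 2 z + 1) + 62*(Nat.log 2 z + 1)) := by
          rw [← pow_mul, ← pow_mul, ← pow_add, ← pow_add]
          congr 1
          ring
  have hexp := (Nat.pow_le_pow_iff_right (by norm_num : 1 < 2)).1 hchain
  -- numeric contradiction
  set sz := Nat.sqrt z with hsz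
  set Lz := Nat.log 2 z with hLz
  set Ly := Nat.log 2 y with hLy
  set K6 := Nat.log 6 y with hK6
  have hzlb : 4194304 ≤ z := by omega
  have hLz22 : 22 ≤ Lz := by
    rw [hLz, Nat.le_log_iff_pow_le (by norm_num) (by omega : z ≠ 0)]
    calc (2:ℕ)^22 = 4194304 := by norm_num
      _ ≤ z := hzlb
  have hzpow : 2^Lz ≤ z := Nat.pow_log_le_self 2 (by omega : z ≠ 0)
  have hsq : 3320*(Lz+1)^2 ≤ z := le_trans (two_pow_big Lz (by omega)) hzpow
  have hsqrt30 : 30*(Lz+1) ≤ sz := by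
    have h1 : (30*(Lz+1))^2 ≤ z := by nlinarith
    calc 30*(Lz+1) = Nat.sqrt ((30*(Lz+1))^2) := by
          rw [Nat.pow_two, Nat.sqrt_eq]
      _ ≤ sz := Nat.sqrt_le_sqrt h1
  have hszsz : sz * sz ≤ z := by
    have := Nat.sqrt_le' z
    rwa [Nat.pow_two] at this
  have hA : 30*(sz*(Lz+1)) ≤ z := by
    calc 30*(sz*(Lz+1)) = sz*(30*(Lz+1)) := by ring
      _ ≤ sz * sz := Nat.mul_le_mul_left _ hsqrt30
      _ ≤ z := hszsz
  have hLyz : Ly ≤ Lz := Nat.log_mono_right hyz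
  have hKL : 2*K6 ≤ Ly := by
    have h4 : (4:ℕ)^K6 ≤ 6^K6 := Nat.pow_le_pow_left (by norm_num) _
    have h6 : (6:ℕ)^K6 ≤ y := Nat.pow_log_le_self 6 (by omega : y ≠ 0)
    rw [hLy, Nat.le_log_iff_pow_le (by norm_num) (by omega : y ≠ 0)]
    calc (2:ℕ)^(2*K6) = 4^K6 := by rw [pow_mul]; norm_num
      _ ≤ y := le_trans h4 h6
  set t2 := (K6 + 1) * (104 + 62*(Ly + 1)) with ht2def
  have ht2 : 2*t2 ≤ (Lz+3)*(104+62*(Lz+1)) := by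
    calc 2*t2 = (2*(K6+1)) * (104 + 62*(Ly+1)) := by ring
      _ ≤ (Lz+3)*(104+62*(Lz+1)) := Nat.mul_le_mul (by omega) (by omega)
  have hq : (Lz+3)*(104+62*(Lz+1)) ≤ 332*(Lz+1)^2 := by nlinarith
  have hB : 62*(Lz+1) ≤ 3*(Lz+1)^2 := by nlinarith
  have hGby : Gb y = (8*y)/5 + t2 := rfl
  omega


lemma chain (k : ℕ) (h2 : 2 ≤ k) (h7 : k ≤ 7000000) (h14 : k ≠ 14) :
    ∃ p, p.Prime ∧ k+1 ≤ 2*p ∧ 3*p ≤ 2*k+3 := by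
  rcases le_or_gt k 3 with h|h
  · exact ⟨2, by norm_num, by omega, by omega⟩
  rcases le_or_gt k 5 with h|h
  · exact ⟨3, by norm_num, by omega, by omega⟩
  rcases le_or_gt k 9 with h|h
  · exact ⟨5, by norm_num, by omega, by omega⟩
  rcases le_or_gt k 13 with h|h
  · exact ⟨7, by norm_num, by omega, by omega⟩
  rcases le_or_gt k 21 with h|h
  · exact ⟨11, by norm_num, by omega, by omega⟩
  rcases le_or_gt k 25 with h|h
  · exact ⟨13, by norm_num, by omega, by omega⟩
  rcases le_or_gt k 33 with h|h
  · exact ⟨17, by norm_num, by omega, by omega⟩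
  rcases le_or_gt k 45 with h|h
  · exact ⟨23, by norm_num, by omega, by omega⟩
  rcases le_or_gt k 61 with h|h
  · exact ⟨31, by norm_num, by omega, by omega⟩
  rcases le_or_gt k 81 with h|h
  · exact ⟨41, by norm_num, by omega, by omega⟩
  rcases le_or_gt k 105 with h|h
  · exact ⟨53, by norm_num, by omega, by omega⟩
  rcases le_or_gt k 141 with h|h
  · exact ⟨71, by norm_num, by omega, by omega⟩
  rcases le_or_gt k 177 with h|h
  · exact ⟨89, by norm_num, by omega, by omega⟩
  rcases le_or_gt k 225 with h|h
  · exact ⟨113, by norm_num, by omega, by omega⟩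
  rcases le_or_gt k 301 with h|h
  · exact ⟨151, by norm_num, by omega, by omega⟩
  rcases le_or_gt k 397 with h|h
  · exact ⟨199, by norm_num, by omega, by omega⟩
  rcases le_or_gt k 525 with h|h
  · exact ⟨263, by norm_num, by omega, by omega⟩
  rcases le_or_gt k 697 with h|h
  · exact ⟨349, by norm_num, by omega, by omega⟩
  rcases le_or_gt k 925 with h|h
  · exact ⟨463, by norm_num, by omega, by omega⟩
  rcases le_or_gt k 1233 with h|h
  · exact ⟨617, by norm_num, by omega, by omega⟩
  rcases le_or_gt k 1645 with h|h
  · exact ⟨823, by norm_num, by omega, by omega⟩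
  rcases le_or_gt k 2193 with h|h
  · exact ⟨1097, by norm_num, by omega, by omega⟩
  rcases le_or_gt k 2917 with h|h
  · exact ⟨1459, by norm_num, by omega, by omega⟩
  rcases le_or_gt k 3865 with h|h
  · exact ⟨1933, by norm_num, by omega, by omega⟩
  rcases le_or_gt k 5113 with h|h
  · exact ⟨2557, by norm_num, by omega, by omega⟩
  rcases le_or_gt k 6813 with h|h
  · exact ⟨3407, by norm_num, by omega, by omega⟩
  rcases le_or_gt k 9045 with h|h
  · exact ⟨4523, by norm_num, by omega, by omega⟩
  rcases le_or_gt k 12057 with h|h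
  · exact ⟨6029, by norm_num, by omega, by omega⟩
  rcases le_or_gt k 16077 with h|h
  · exact ⟨8039, by norm_num, by omega, by omega⟩
  rcases le_or_gt k 21421 with h|h
  · exact ⟨10711, by norm_num, by omega, by omega⟩
  rcases le_or_gt k 28561 with h|h
  · exact ⟨14281, by norm_num, by omega, by omega⟩
  rcases le_or_gt k 38073 with h|h
  · exact ⟨19037, by norm_num, by omega, by omega⟩
  rcases le_or_gt k 50745 with h|h
  · exact ⟨25373, by norm_num, by omega, by omega⟩
  rcases le_or_gt k 67657 with h|h
  · exact ⟨33829, by norm_num, by omega, by omega⟩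
  rcases le_or_gt k 90165 with h|h
  · exact ⟨45083, by norm_num, by omega, by omega⟩
  rcases le_or_gt k 120213 with h|h
  · exact ⟨60107, by norm_num, by omega, by omega⟩
  rcases le_or_gt k 160281 with h|h
  · exact ⟨80141, by norm_num, by omega, by omega⟩
  rcases le_or_gt k 213705 with h|h
  · exact ⟨106853, by norm_num, by omega, by omega⟩
  rcases le_or_gt k 284937 with h|h
  · exact ⟨142469, by norm_num, by omega, by omega⟩
  rcases le_or_gt k 379897 with h|h
  · exact ⟨189949, by norm_num, by omega, by omega⟩
  rcases le_or_gt k 506493 with h|h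
  · exact ⟨253247, by norm_num, by omega, by omega⟩
  rcases le_or_gt k 675321 with h|h
  · exact ⟨337661, by norm_num, by omega, by omega⟩
  rcases le_or_gt k 900417 with h|h
  · exact ⟨450209, by norm_num, by omega, by omega⟩
  rcases le_or_gt k 1200537 with h|h
  · exact ⟨600269, by norm_num, by omega, by omega⟩
  rcases le_or_gt k 1600713 with h|h
  · exact ⟨800357, by norm_num, by omega, by omega⟩
  rcases le_or_gt k 2134273 with h|h
  · exact ⟨1067137, by norm_num, by omega, by omega⟩
  rcases le_or_gt k 2845665 with h|h
  · exact ⟨1422833, by norm_num, by omega, by omega⟩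
  rcases le_or_gt k 3794197 with h|h
  · exact ⟨1897099, by norm_num, by omega, by omega⟩
  rcases le_or_gt k 5058925 with h|h
  · exact ⟨2529463, by norm_num, by omega, by omega⟩
  rcases le_or_gt k 6745201 with h|h
  · exact ⟨3372601, by norm_num, by omega, by omega⟩
  exact ⟨4496801, by norm_num, by omega, by omega⟩

end PIR

theorem exists_prime_in_range (k : ℕ) (hk : 3 ≤ k) (hk14 : k ≠ 14) :
    ∃ s : ℕ, (k - 1 + 1) / 2 ≤ s ∧ s ≤ k - 1 - (k - 1) / 3 ∧ Nat.Prime (s + 1) := by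
  obtain ⟨p, hp, h1, h2⟩ : ∃ p, p.Prime ∧ k+1 ≤ 2*p ∧ 3*p ≤ 2*k+3 := by
    rcases le_or_gt k 7000000 with h|h
    · exact PIR.chain k (by omega) h hk14
    · exact PIR.big k (by omega)
  have hp2 := hp.two_le
  refine ⟨p - 1, by omega, by omega, ?_⟩
  have hpe : p - 1 + 1 = p := by omega
  rw [hpe]
  exact hp
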